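/- Less-partial strategies give larger approximated languages: let A₁, A₂ be S-proper approximation strategies with A₁ less partial than A₂ (i.e., there is an injective partial function A with A₁;A = A₂). Then L(ℳ¦A₁) ⊇ L(ℳ¦A₂) for every (S,Σ)-automaton ℳ. -/

import Mathlib

/-- A transition of an automaton with data storage. -/
structure Tr (Q C Sym : Type) where
  src : Q
  lab : Option Sym
  pred : Set C
  instr : Set (C × C)
  tgt : Q

/-- One-step transition relation of a single transition. -/
def trStep {Q C Sym : Type} (τ : Tr Q C Sym) :
    Q × C × List Sym → Q × C × List Sym → Prop := fun x y =>
  x.1 = τ.src ∧ y.1 = τ.tgt ∧ x.2.1 ∈ τ.pred ∧ (x.2.1, y.2.1) ∈ τ.instr ∧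
    x.2.2 = τ.lab.toList ++ y.2.2

/-- Transition relation along a sequence of transitions. -/
def runSeq {Q C Sym : Type} :
    List (Tr Q C Sym) → (Q × C × List Sym) → (Q × C × List Sym) → Prop
  | [], x, y => x = y
  | τ :: θ, x, y => ∃ z, trStep τ x z ∧ runSeq θ z y

/-- An automaton with data storage (states `Q`, storage configurations `C`,
input alphabet `Sym`). -/
structure Aut (Q C Sym : Type) where
  T : Set (Tr Q C Sym)
  Tfin : T.Finite
  Qi : Set Q
  Qf : Set Q

/-- The language of an automaton, given an initial storage configuration. -/
def langOf {Q C Sym : Type} (init : C) (M : Aut Q C Sym) : Set (List Sym) :=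
  {w | ∃ θ : List (Tr Q C Sym), (∀ τ ∈ θ, τ ∈ M.T) ∧
    ∃ q ∈ M.Qi, ∃ q' ∈ M.Qf, ∃ c', runSeq θ (q, init, w) (q', c', [])}

/-- The language, where the initial storage configuration may be undefined. -/
def langOptOf {Q C Sym : Type} (initO : Option C) (M : Aut Q C Sym) :
    Set (List Sym) :=
  {w | ∃ c₀, initO = some c₀ ∧ w ∈ langOf c₀ M}

/-- A data storage: predicates, instructions, an initial configuration,
such that `r(c)` is finite for every instruction `r` and configuration `c`. -/
structure DS (C : Type) where
  preds : Set (Set C)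
  instrs : Set (Set (C × C))
  init : C
  fin : ∀ r ∈ instrs, ∀ c : C, {c' | (c, c') ∈ r}.Finite

/-- An automaton is an `(S,Σ)`-automaton if all its predicates and instructions
come from the data storage `S`. -/
def ValidFor {Q C Sym : Type} (S : DS C) (M : Aut Q C Sym) : Prop :=
  ∀ τ ∈ M.T, τ.pred ∈ S.preds ∧ τ.instr ∈ S.instrs

/-- Approximation of a predicate: the image `A(p)`. -/
def appPred {C C' : Type} (A : C → Option C') (p : Set C) : Set C' :=
  {c' | ∃ c ∈ p, A c = some c'}

/-- Approximation of an instruction: `A⁻¹ ; r ; A`. -/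
def appRel {C C' : Type} (A : C → Option C') (r : Set (C × C)) :
    Set (C' × C') :=
  {x | ∃ c₁ c₂, A c₁ = some x.1 ∧ (c₁, c₂) ∈ r ∧ A c₂ = some x.2}

/-- `A` is proper for a set of instructions if `(A⁻¹;r;A)(c')` is finite. -/
def ProperFor {C C' : Type} (A : C → Option C')
    (Rs : Set (Set (C × C))) : Prop :=
  ∀ r ∈ Rs, ∀ c' : C', {c₂' | (c', c₂') ∈ appRel A r}.Finite

/-- Approximation of a transition. -/
def appTr {Q C C' Sym : Type} (A : C → Option C') (τ : Tr Q C Sym) :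
    Tr Q C' Sym :=
  ⟨τ.src, τ.lab, appPred A τ.pred, appRel A τ.instr, τ.tgt⟩

/-- Approximation of an automaton with respect to `A`. -/
def appAut {Q C C' Sym : Type} (A : C → Option C') (M : Aut Q C Sym) :
    Aut Q C' Sym :=
  ⟨appTr A '' M.T, M.Tfin.image _, M.Qi, M.Qf⟩

/-- Totality of an approximation strategy. -/
def TotalStrat {C C' : Type} (A : C → Option C') : Prop :=
  ∀ c, (A c).isSome

/-- Injectivity of a partial function. -/
def InjStrat {C C' : Type} (A : C → Option C') : Prop :=
  ∀ c₁ c₂ c', A c₁ = some c' → A c₂ = some c' → c₁ = c₂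

lemma lp_decomp {C C₁ C₂ : Type} {A₁ : C → Option C₁} {A₂ : C → Option C₂}
    {A : C₁ → Option C₂} (hcomp : ∀ c, (A₁ c).bind A = A₂ c)
    {c : C} {x : C₂} (h : A₂ c = some x) :
    ∃ u, A₁ c = some u ∧ A u = some x := by
  rw [← hcomp] at h
  cases h' : A₁ c with
  | none => rw [h'] at h; simp at h
  | some u => rw [h'] at h; exact ⟨u, rfl, h⟩

lemma lp_run {Q C C₁ C₂ Sym : Type} (M : Aut Q C Sym)
    {A₁ : C → Option C₁} {A₂ : C → Option C₂}
    {A : C₁ → Option C₂} (hinj : InjStrat A)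
    (hcomp : ∀ c, (A₁ c).bind A = A₂ c) :
    ∀ (θ : List (Tr Q C₂ Sym)) (x y : Q × C₂ × List Sym) (u : C₁),
      (∀ τ' ∈ θ, τ' ∈ (appAut A₂ M).T) →
      runSeq θ x y → A u = some x.2.1 →
      ∃ θ₁ : List (Tr Q C₁ Sym), (∀ σ ∈ θ₁, σ ∈ (appAut A₁ M).T) ∧
        ∃ v, A v = some y.2.1 ∧ runSeq θ₁ (x.1, u, x.2.2) (y.1, v, y.2.2) := by
  intro θ
  induction θ with
  | nil =>
    intro x y u _ hrun hu
    cases hrun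
    exact ⟨[], by simp, u, hu, rfl⟩
  | cons τ' θ ih =>
    intro x y u hθ hrun hu
    obtain ⟨z, hstep, hrest⟩ := hrun
    obtain ⟨τ, hτM, rfl⟩ := hθ τ' List.mem_cons_self
    obtain ⟨hsrc, htgt, hpred, hinstr, hlab⟩ := hstep
    -- decompose the instruction
    obtain ⟨c, d, hc, hcd, hd⟩ := hinstr
    obtain ⟨u', hu'₁, hu'₂⟩ := lp_decomp hcomp hc
    obtain ⟨v, hv₁, hv₂⟩ := lp_decomp hcomp hd
    have huu : u' = u := hinj _ _ _ hu'₂ hu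
    subst huu
    -- decompose the predicate
    obtain ⟨p, hp, hpA⟩ := hpred
    obtain ⟨u'', hu''₁, hu''₂⟩ := lp_decomp hcomp hpA
    have huu2 : u'' = u' := hinj _ _ _ hu''₂ hu
    subst huu2
    obtain ⟨θ₁, hθ₁, v', hv', hrun'⟩ :=
      ih z y v (fun σ hσ => hθ σ (List.mem_cons_of_mem _ hσ)) hrest hv₂
    refine ⟨appTr A₁ τ :: θ₁, ?_, v', hv', ?_⟩
    · intro σ hσ
      rcases List.mem_cons.mp hσ with h | h
      · exact h ▸ ⟨τ, hτM, rfl⟩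
      · exact hθ₁ σ h
    · exact ⟨(z.1, v, z.2.2),
        ⟨hsrc, htgt, ⟨p, hp, hu''₁⟩, ⟨c, d, hu'₁, hcd, hv₁⟩, hlab⟩, hrun'⟩

/-- If `A₁` is less partial than `A₂` (there is an injective partial `A`
with `A₁;A = A₂`), then `L(ℳ¦A₁) ⊇ L(ℳ¦A₂)`. -/
theorem less_partial_approximation {Q C C₁ C₂ Sym : Type} (S : DS C)
    (M : Aut Q C Sym) (hval : ValidFor S M)
    (A₁ : C → Option C₁) (A₂ : C → Option C₂)
    (h₁ : ProperFor A₁ S.instrs) (h₂ : ProperFor A₂ S.instrs)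
    (hlp : ∃ A : C₁ → Option C₂, InjStrat A ∧ ∀ c : C, (A₁ c).bind A = A₂ c) :
    langOptOf (A₂ S.init) (appAut A₂ M) ⊆
      langOptOf (A₁ S.init) (appAut A₁ M) := by
  obtain ⟨A, hinj, hcomp⟩ := hlp
  intro w hw
  obtain ⟨c₀, hinit, θ, hθ, q, hq, q', hq', c', hrun⟩ := hw
  obtain ⟨u₀, hu₀₁, hu₀₂⟩ := lp_decomp hcomp hinit
  obtain ⟨θ₁, hθ₁, v, _, hrun'⟩ :=
    lp_run M hinj hcomp θ (q, c₀, w) (q', c', []) u₀ hθ hrun hu₀₂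
  exact ⟨u₀, hu₀₁, θ₁, hθ₁, q, hq, q', hq', v, hrun'⟩
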